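/- For every positive integer r there exist constants C_r, c_r, K_r ∈ (0, ∞) and n_0(r) ∈ ℕ such that the following holds. Let n ≥ n_0(r), m = ⌈C_r n^{1−1/r}⌉ and N = n^m. Let H = ([n], E) be a 2r-uniform hypergraph. Then there exists a symmetric matrix A ∈ ℝ^{N×N} with nonnegative integer entries such that ‖A‖ ≤ K_r · Δ(H) (operator norm) and, for every x ∈ {−1,1}^n, p_H(x) = (n / (c_r N)) · ⟨A x^{⊗m}, x^{⊗m}⟩, where x^{⊗m} ∈ ℝ^{[n]^m} is the vector with coordinates (x^{⊗m})_u = Π_{i=1}^m x_{u_i} for u ∈ [n]^m. -/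

import Mathlib

open Finset

noncomputable def opNorm {ι : Type*} [Fintype ι] (A : Matrix ι ι ℝ) : ℝ :=
  sSup {c : ℝ | ∃ x y : ι → ℝ,
    (∑ i, x i ^ 2) ≤ 1 ∧ (∑ i, y i ^ 2) ≤ 1 ∧ c = |∑ i, ∑ j, A i j * x j * y i|}



theorem opNorm_le_rowsum {ι : Type*} [Fintype ι] (A : Matrix ι ι ℝ) (R : ℝ) (hR : 0 ≤ R)
    (h0 : ∀ i j, 0 ≤ A i j)
    (hrow : ∀ i, ∑ j, A i j ≤ R) (hcol : ∀ j, ∑ i, A i j ≤ R) :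
    opNorm A ≤ R := by
  apply Real.sSup_le _ hR
  rintro c ⟨x, y, hx, hy, rfl⟩
  have key : ∀ i j, |A i j * x j * y i| ≤ A i j * ((x j) ^ 2 + (y i) ^ 2) / 2 := by
    intro i j
    rw [abs_mul, abs_mul, abs_of_nonneg (h0 i j), mul_assoc, mul_div_assoc]
    apply mul_le_mul_of_nonneg_left _ (h0 i j)
    rw [le_div_iff₀ (by norm_num : (0:ℝ) < 2)]
    calc |x j| * |y i| * 2 = 2 * |x j| * |y i| := by ring
    _ ≤ |x j| ^ 2 + |y i| ^ 2 := two_mul_le_add_sq |x j| |y i|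
    _ = (x j) ^ 2 + (y i) ^ 2 := by rw [sq_abs, sq_abs]
  have hxpart : ∑ i, ∑ j, A i j * (x j) ^ 2 ≤ R := by
    rw [Finset.sum_comm]
    calc ∑ j, ∑ i, A i j * (x j) ^ 2 = ∑ j, (∑ i, A i j) * (x j) ^ 2 := by
          apply Finset.sum_congr rfl; intro j _; rw [Finset.sum_mul]
      _ ≤ ∑ j, R * (x j) ^ 2 := by
          apply Finset.sum_le_sum; intro j _
          exact mul_le_mul_of_nonneg_right (hcol j) (sq_nonneg _)
      _ = R * ∑ j, (x j) ^ 2 := by rw [Finset.mul_sum]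
      _ ≤ R * 1 := mul_le_mul_of_nonneg_left hx hR
      _ = R := mul_one R
  have hypart : ∑ i, ∑ j, A i j * (y i) ^ 2 ≤ R := by
    calc ∑ i, ∑ j, A i j * (y i) ^ 2 = ∑ i, (∑ j, A i j) * (y i) ^ 2 := by
          apply Finset.sum_congr rfl; intro i _; rw [Finset.sum_mul]
      _ ≤ ∑ i, R * (y i) ^ 2 := by
          apply Finset.sum_le_sum; intro i _
          exact mul_le_mul_of_nonneg_right (hrow i) (sq_nonneg _)
      _ = R * ∑ i, (y i) ^ 2 := by rw [Finset.mul_sum]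
      _ ≤ R * 1 := mul_le_mul_of_nonneg_left hy hR
      _ = R := mul_one R
  have hmid : ∀ i, ∑ j, A i j * ((x j) ^ 2 + (y i) ^ 2) / 2
      = ((∑ j, A i j * (x j) ^ 2) + (∑ j, A i j * (y i) ^ 2)) / 2 := by
    intro i
    rw [← Finset.sum_add_distrib, ← Finset.sum_div]
    congr 1
    apply Finset.sum_congr rfl; intro j _; ring
  calc |∑ i, ∑ j, A i j * x j * y i| ≤ ∑ i, |∑ j, A i j * x j * y i| :=
        Finset.abs_sum_le_sum_abs _ _
    _ ≤ ∑ i, ∑ j, |A i j * x j * y i| := by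
        apply Finset.sum_le_sum; intro i _; exact Finset.abs_sum_le_sum_abs _ _
    _ ≤ ∑ i, ∑ j, A i j * ((x j) ^ 2 + (y i) ^ 2) / 2 := by
        apply Finset.sum_le_sum; intro i _; apply Finset.sum_le_sum; intro j _; exact key i j
    _ = ((∑ i, ∑ j, A i j * (x j) ^ 2) + (∑ i, ∑ j, A i j * (y i) ^ 2)) / 2 := by
        simp_rw [hmid]
        rw [← Finset.sum_div, ← Finset.sum_add_distrib]
    _ ≤ R := by linarith





lemma msum_swap {α β γ : Type*} [AddCommMonoid β] (E : Multiset α) (s : Finset γ) (f : α → γ → β) :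
    ∑ v ∈ s, (E.map fun e => f e v).sum = (E.map fun e => ∑ v ∈ s, f e v).sum := by
  induction E using Multiset.induction_on with
  | empty => simp
  | cons e E ih => simp [Multiset.map_cons, Multiset.sum_cons, Finset.sum_add_distrib, ih]

lemma msum_le {α : Type*} (E : Multiset α) (f g : α → ℕ) (h : ∀ x ∈ E, f x ≤ g x) :
    (E.map f).sum ≤ (E.map g).sum := by
  induction E using Multiset.induction_on with
  | empty => simp
  | cons e E ih =>
      simp only [Multiset.map_cons, Multiset.sum_cons]
      exact add_le_add (h e (Multiset.mem_cons_self e E))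
        (ih fun x hx => h x (Multiset.mem_cons_of_mem hx))

lemma mcountP_eq {α : Type*} (E : Multiset α) (p : α → Prop) [DecidablePred p] :
    (E.map fun e => if p e then 1 else 0).sum = E.countP p := by
  induction E using Multiset.induction_on with
  | empty => simp
  | cons e E ih =>
      simp only [Multiset.map_cons, Multiset.sum_cons, Multiset.countP_cons, ih]
      by_cases h : p e <;> simp [h] <;> omega

lemma msum_ite {α : Type*} (E : Multiset α) (p : α → Prop) [DecidablePred p] (a b : ℕ) :
    (E.map fun e => if p e then a else b).sum = a * E.countP p + b * E.countP (fun e => ¬ p e) := by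
  induction E using Multiset.induction_on with
  | empty => simp
  | cons e E ih =>
      simp only [Multiset.map_cons, Multiset.sum_cons, Multiset.countP_cons, ih]
      by_cases h : p e <;> simp [h] <;> ring

lemma msum_const {α : Type*} (E : Multiset α) (c : ℕ) :
    (E.map fun _ => c).sum = c * Multiset.card E := by
  induction E using Multiset.induction_on with
  | empty => simp
  | cons e E ih => simp [Multiset.map_cons, Multiset.sum_cons, ih]; ring

lemma pow_sub_bound (nn a : ℕ) (ha : a ≤ nn) :
    ∀ k : ℕ, nn ^ k ≤ (nn - a) ^ k + k * a * nn ^ (k - 1)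
  | 0 => by simp
  | (k+1) => by
    have hk := pow_sub_bound nn a ha k
    have hstep : k*a*(nn ^ (k-1) * nn) ≤ k*a*nn ^ k := by
      cases k with
      | zero => simp
      | succ k' => exact Nat.mul_le_mul_left _ (by simp [← pow_succ])
    calc nn ^ (k+1) = nn ^ k * nn := pow_succ nn k
      _ ≤ ((nn-a) ^ k + k*a*nn^(k-1)) * nn := Nat.mul_le_mul_right _ hk
      _ = (nn-a)^k * nn + k*a*(nn^(k-1)*nn) := by ring
      _ ≤ (nn-a)^k * nn + k*a*nn^k := Nat.add_le_add_left hstep _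
      _ = (nn-a)^k * ((nn-a) + a) + k*a*nn^k := by rw [Nat.sub_add_cancel ha]
      _ = (nn-a)^(k+1) + a * (nn-a)^k + k*a*nn^k := by ring
      _ ≤ (nn-a)^(k+1) + a * nn^k + k*a*nn^k := by
          have h2 : (nn-a)^k ≤ nn^k := Nat.pow_le_pow_left (Nat.sub_le _ _) _
          have := Nat.mul_le_mul_left a h2
          omega
      _ = (nn-a)^(k+1) + (k+1)*a*nn^((k+1)-1) := by simp; ring

lemma pow_sub_half (nn a k : ℕ) (h : 2 * (k * a) ≤ nn) :
    nn ^ k ≤ 2 * (nn - a) ^ k := by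
  cases k with
  | zero => simp
  | succ k' =>
    set k := k' + 1
    have ha : a ≤ nn := by
      have : a ≤ k * a := Nat.le_mul_of_pos_left a (Nat.succ_pos k')
      omega
    have h1 := pow_sub_bound nn a ha k
    set X := nn ^ k with hX
    set Y := (nn - a) ^ k with hY
    set Z := k * a * nn ^ (k - 1) with hZ
    have h2 : 2 * Z ≤ X := by
      have h4 : 2 * (k * a) * nn ^ (k-1) ≤ nn * nn ^ (k-1) :=
        Nat.mul_le_mul_right _ h
      have h3 : nn * nn ^ (k-1) = X := by
        rw [hX]
        show nn * nn ^ k' = nn ^ (k' + 1)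
        rw [pow_succ]; ring
      rw [hZ]
      calc 2 * (k * a * nn ^ (k-1)) = 2 * (k * a) * nn ^ (k-1) := by ring
        _ ≤ nn * nn ^ (k-1) := h4
        _ = X := h3
    omega



lemma card_fiber_le (S : Finset (Fin n)) (g : ↥S → Fin m) :
    (univ.filter fun z : Fin m → Fin n => ∀ w : ↥S, z (g w) = ↑w).card ≤ n ^ (m - S.card) := by
  classical
  by_cases hne : (univ.filter fun z : Fin m → Fin n => ∀ w : ↥S, z (g w) = ↑w).Nonempty
  · obtain ⟨z0, hz0⟩ := hne
    rw [mem_filter] at hz0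
    have hginj : Function.Injective g := by
      intro w w' hww
      have h1 := hz0.2 w
      have h2 := hz0.2 w'
      rw [hww] at h1
      exact Subtype.ext (h1 ▸ h2 ▸ rfl)
    set Pc : Finset (Fin m) := univ \ univ.image (fun w : ↥S => g w) with hPc
    have hcard : Pc.card = m - S.card := by
      rw [hPc, card_sdiff_of_subset (subset_univ _), card_univ, Fintype.card_fin,
        card_image_of_injective _ hginj, card_univ, Fintype.card_coe]
    have hinj : Set.InjOn (fun z : Fin m → Fin n => (fun j : ↥Pc => z ↑j))
        ((univ.filter fun z : Fin m → Fin n => ∀ w : ↥S, z (g w) = ↑w) : Finset _) := by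
      intro z hz z' hz' hzz
      rw [Finset.mem_coe, mem_filter] at hz hz'
      funext j
      by_cases hj : j ∈ Pc
      · exact congrFun hzz ⟨j, hj⟩
      · have : j ∈ univ.image (fun w : ↥S => g w) := by
          rw [hPc] at hj
          simp only [mem_sdiff, mem_univ, true_and, not_not] at hj
          exact hj
        obtain ⟨w, _, hw⟩ := mem_image.mp this
        rw [← hw, hz.2 w, hz'.2 w]
    calc (univ.filter fun z : Fin m → Fin n => ∀ w : ↥S, z (g w) = ↑w).card
        ≤ (univ : Finset (↥Pc → Fin n)).card :=
          Finset.card_le_card_of_injOn _ (fun z _ => mem_univ _) hinj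
      _ = n ^ (m - S.card) := by
          rw [card_univ, Fintype.card_fun, Fintype.card_fin, Fintype.card_coe, hcard]
  · rw [Finset.not_nonempty_iff_eq_empty] at hne
    rw [hne]
    simp

lemma card_cover_le (S : Finset (Fin n)) :
    (univ.filter fun z : Fin m → Fin n => ∀ w ∈ S, ∃ i, z i = w).card
      ≤ m ^ S.card * n ^ (m - S.card) := by
  classical
  have hsub : (univ.filter fun z : Fin m → Fin n => ∀ w ∈ S, ∃ i, z i = w) ⊆
      (univ : Finset (↥S → Fin m)).biUnion
        (fun g => univ.filter fun z : Fin m → Fin n => ∀ w : ↥S, z (g w) = ↑w) := by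
    intro z hz
    rw [mem_filter] at hz
    have : ∀ w : ↥S, ∃ i, z i = ↑w := fun w => hz.2 ↑w w.2
    choose g hg using this
    rw [mem_biUnion]
    exact ⟨g, mem_univ _, mem_filter.mpr ⟨mem_univ _, hg⟩⟩
  calc (univ.filter fun z : Fin m → Fin n => ∀ w ∈ S, ∃ i, z i = w).card
      ≤ ((univ : Finset (↥S → Fin m)).biUnion
        (fun g => univ.filter fun z : Fin m → Fin n => ∀ w : ↥S, z (g w) = ↑w)).card :=
        card_le_card hsub
    _ ≤ ∑ g : ↥S → Fin m, (univ.filter fun z : Fin m → Fin n => ∀ w : ↥S, z (g w) = ↑w).card :=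
        card_biUnion_le
    _ ≤ ∑ _g : ↥S → Fin m, n ^ (m - S.card) :=
        Finset.sum_le_sum fun g _ => card_fiber_le S g
    _ = m ^ S.card * n ^ (m - S.card) := by
        rw [Finset.sum_const, card_univ, Fintype.card_fun, Fintype.card_coe, Fintype.card_fin,
          smul_eq_mul]
open scoped Classical

variable {n r m : ℕ}

def iA (r : ℕ) (i : Fin r) : Fin (2*r) := ⟨i.1, by have := i.2; omega⟩
def iB (r : ℕ) (i : Fin r) : Fin (2*r) := ⟨r + i.1, by have := i.2; omega⟩

lemma iA_inj {i i' : Fin r} (h : iA r i = iA r i') : i = i' := by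
  rcases i; rcases i'; simpa [iA, Fin.ext_iff] using h

lemma iB_inj {i i' : Fin r} (h : iB r i = iB r i') : i = i' := by
  rcases i; rcases i'; simpa [iB, Fin.ext_iff] using h

lemma iA_ne_iB (i i' : Fin r) : iA r i ≠ iB r i' := by
  rcases i with ⟨v, hv⟩; rcases i' with ⟨v', hv'⟩; simp [iA, iB, Fin.ext_iff]; omega

noncomputable def en (e : Finset (Fin n)) (he : e.card = 2*r) (k : Fin (2*r)) : Fin n :=
  ↑(e.orderIsoOfFin he k)

lemma en_mem (e : Finset (Fin n)) (he : e.card = 2*r) (k : Fin (2*r)) : en e he k ∈ e :=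
  (e.orderIsoOfFin he k).2

lemma en_inj {e : Finset (Fin n)} {he : e.card = 2*r} {k k' : Fin (2*r)}
    (h : en e he k = en e he k') : k = k' :=
  (e.orderIsoOfFin he).injective (Subtype.ext h)

noncomputable def block (e : Finset (Fin n)) (he : e.card = 2*r) (P : Fin r ↪ Fin m) :
    Finset (Fin m → Fin n) :=
  univ.filter fun z =>
    (∀ i : Fin r, z (P i) = en e he (iA r i)) ∧ ∀ j : Fin m, (∀ i, P i ≠ j) → z j ∉ e

lemma mem_block {e : Finset (Fin n)} {he : e.card = 2*r} {P : Fin r ↪ Fin m}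
    {z : Fin m → Fin n} : z ∈ block e he P ↔
    (∀ i : Fin r, z (P i) = en e he (iA r i)) ∧ ∀ j : Fin m, (∀ i, P i ≠ j) → z j ∉ e := by
  simp [block]

noncomputable def phi (e : Finset (Fin n)) (he : e.card = 2*r) (P : Fin r ↪ Fin m)
    (z : Fin m → Fin n) : Fin m → Fin n :=
  fun j => if h : ∃ i, P i = j then en e he (iB r h.choose) else z j

lemma phi_at_P (e : Finset (Fin n)) (he : e.card = 2*r) (P : Fin r ↪ Fin m)
    (z : Fin m → Fin n) (i : Fin r) : phi e he P z (P i) = en e he (iB r i) := by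
  have h : ∃ i', P i' = P i := ⟨i, rfl⟩
  have hch : h.choose = i := P.injective h.choose_spec
  show dite _ _ _ = _
  rw [dif_pos h, hch]

lemma phi_off (e : Finset (Fin n)) (he : e.card = 2*r) (P : Fin r ↪ Fin m)
    (z : Fin m → Fin n) (j : Fin m) (hj : ∀ i, P i ≠ j) : phi e he P z j = z j := by
  show dite _ _ _ = _
  rw [dif_neg]
  rintro ⟨i, hi⟩
  exact hj i hi

lemma block_unique {e : Finset (Fin n)} {he : e.card = 2*r} {P P' : Fin r ↪ Fin m}
    {z : Fin m → Fin n} (hz : z ∈ block e he P) (hz' : z ∈ block e he P') : P = P' := by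
  rw [mem_block] at hz hz'
  apply DFunLike.ext
  intro i
  have hex : ∃ i', P' i' = P i := by
    by_contra h
    push_neg at h
    exact hz'.2 (P i) h (hz.1 i ▸ en_mem e he (iA r i))
  obtain ⟨i', hi'⟩ := hex
  have : en e he (iA r i') = en e he (iA r i) := by
    rw [← hz'.1 i', hi', hz.1 i]
  have h5 := iA_inj (en_inj this)
  subst h5; exact hi'.symm

lemma phi_unique {e : Finset (Fin n)} {he : e.card = 2*r} {P P' : Fin r ↪ Fin m}
    {z z' : Fin m → Fin n} (hz : z ∈ block e he P) (hz' : z' ∈ block e he P')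
    (hφ : phi e he P z = phi e he P' z') : P = P' ∧ z = z' := by
  have hPP : P = P' := by
    apply DFunLike.ext
    intro i
    have hex : ∃ i', P' i' = P i := by
      by_contra h
      push_neg at h
      have h1 : phi e he P' z' (P i) = z' (P i) := phi_off _ _ _ _ _ h
      have h2 : phi e he P z (P i) = en e he (iB r i) := phi_at_P _ _ _ _ i
      have h3 : z' (P i) ∉ e := (mem_block.mp hz').2 (P i) h
      rw [hφ, h1] at h2
      exact h3 (h2 ▸ en_mem e he (iB r i))
    obtain ⟨i', hi'⟩ := hex
    have h1 : phi e he P' z' (P' i') = en e he (iB r i') := phi_at_P _ _ _ _ i'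
    have h2 : phi e he P z (P i) = en e he (iB r i) := phi_at_P _ _ _ _ i
    rw [hφ] at h2
    rw [hi'] at h1
    have h5 := iB_inj (en_inj (h1.symm.trans h2))
    subst h5; exact hi'.symm
  refine ⟨hPP, ?_⟩
  subst hPP
  funext j
  by_cases hex : ∃ i, P i = j
  · obtain ⟨i, rfl⟩ := hex
    rw [(mem_block.mp hz).1 i, (mem_block.mp hz').1 i]
  · push_neg at hex
    have h1 := phi_off e he P z j hex
    have h2 := phi_off e he P z' j hex
    rw [← h1, ← h2, hφ]

lemma left_ne_phi {e : Finset (Fin n)} {he : e.card = 2*r} {P P' : Fin r ↪ Fin m}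
    {z z' : Fin m → Fin n} (hr : 0 < r) (hz : z ∈ block e he P) (hz' : z' ∈ block e he P') :
    z ≠ phi e he P' z' := by
  intro hcontra
  set i0 : Fin r := ⟨0, hr⟩
  have h1 : phi e he P' z' (P' i0) = en e he (iB r i0) := phi_at_P _ _ _ _ i0
  by_cases hex : ∃ i, P i = P' i0
  · obtain ⟨i, hi⟩ := hex
    have h2 : z (P i) = en e he (iA r i) := (mem_block.mp hz).1 i
    rw [hi, hcontra, h1] at h2
    exact iA_ne_iB i i0 (en_inj h2.symm)
  · push_neg at hex
    have h2 : z (P' i0) ∉ e := (mem_block.mp hz).2 (P' i0) hex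
    rw [hcontra, h1] at h2
    exact h2 (en_mem _ _ _)

/-- `z` has at least `r` of the values of `e` among its coordinates. -/
def X (r : ℕ) (e : Finset (Fin n)) (z : Fin m → Fin n) : Prop :=
  r ≤ (e.filter fun w => ∃ i, z i = w).card

lemma X_of_block {e : Finset (Fin n)} {he : e.card = 2*r} {P : Fin r ↪ Fin m}
    {z : Fin m → Fin n} (hz : z ∈ block e he P) : X r e z := by
  have hsub : univ.image (fun i : Fin r => en e he (iA r i)) ⊆
      e.filter fun w => ∃ i, z i = w := by
    intro w hw
    obtain ⟨i, _, rfl⟩ := mem_image.mp hw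
    exact mem_filter.mpr ⟨en_mem _ _ _, ⟨P i, (mem_block.mp hz).1 i⟩⟩
  have hcard : (univ.image (fun i : Fin r => en e he (iA r i))).card = r := by
    rw [card_image_of_injective _ (fun a b hab => iA_inj (en_inj hab)), card_univ,
      Fintype.card_fin]
  calc r = _ := hcard.symm
    _ ≤ _ := card_le_card hsub

lemma X_of_phi {e : Finset (Fin n)} {he : e.card = 2*r} {P : Fin r ↪ Fin m}
    {z : Fin m → Fin n} (hz : z ∈ block e he P) : X r e (phi e he P z) := by
  have hsub : univ.image (fun i : Fin r => en e he (iB r i)) ⊆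
      e.filter fun w => ∃ i, phi e he P z i = w := by
    intro w hw
    obtain ⟨i, _, rfl⟩ := mem_image.mp hw
    exact mem_filter.mpr ⟨en_mem _ _ _, ⟨P i, phi_at_P _ _ _ _ i⟩⟩
  have hcard : (univ.image (fun i : Fin r => en e he (iB r i))).card = r := by
    rw [card_image_of_injective _ (fun a b hab => iB_inj (en_inj hab)), card_univ,
      Fintype.card_fin]
  calc r = _ := hcard.symm
    _ ≤ _ := card_le_card hsub

lemma card_X_le (e : Finset (Fin n)) (he : e.card = 2*r) :
    (univ.filter fun z : Fin m → Fin n => X r e z).card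
      ≤ (2*r).choose r * (m ^ r * n ^ (m - r)) := by
  have hsub : (univ.filter fun z : Fin m → Fin n => X r e z) ⊆
      (e.powersetCard r).biUnion
        (fun S => univ.filter fun z : Fin m → Fin n => ∀ w ∈ S, ∃ i, z i = w) := by
    intro z hz
    have hX : X r e z := (mem_filter.mp hz).2
    obtain ⟨S, hS, hcard⟩ := Finset.exists_subset_card_eq hX
    rw [mem_biUnion]
    refine ⟨S, mem_powersetCard.mpr ⟨hS.trans (filter_subset _ _), hcard⟩, ?_⟩
    refine mem_filter.mpr ⟨mem_univ _, fun w hw => ?_⟩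
    exact (mem_filter.mp (hS hw)).2
  calc (univ.filter fun z : Fin m → Fin n => X r e z).card
      ≤ _ := card_le_card hsub
    _ ≤ ∑ S ∈ e.powersetCard r,
        (univ.filter fun z : Fin m → Fin n => ∀ w ∈ S, ∃ i, z i = w).card := card_biUnion_le
    _ ≤ ∑ S ∈ e.powersetCard r, m ^ r * n ^ (m - r) := by
        apply Finset.sum_le_sum
        intro S hS
        have hcard : S.card = r := (mem_powersetCard.mp hS).2
        have := card_cover_le (m := m) S
        rwa [hcard] at this
    _ = (2*r).choose r * (m ^ r * n ^ (m - r)) := by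
        rw [Finset.sum_const, card_powersetCard, he, smul_eq_mul]

lemma card_XX_le (e e' : Finset (Fin n)) (he : e.card = 2*r) (he' : e'.card = 2*r)
    (hd : Disjoint e e') :
    (univ.filter fun z : Fin m → Fin n => X r e z ∧ X r e' z).card
      ≤ ((2*r).choose r * (2*r).choose r) * (m ^ (2*r) * n ^ (m - 2*r)) := by
  have hsub : (univ.filter fun z : Fin m → Fin n => X r e z ∧ X r e' z) ⊆
      (e.powersetCard r ×ˢ e'.powersetCard r).biUnion
        (fun S => univ.filter fun z : Fin m → Fin n => ∀ w ∈ S.1 ∪ S.2, ∃ i, z i = w) := by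
    intro z hz
    have hX := (mem_filter.mp hz).2
    obtain ⟨S, hS, hcard⟩ := Finset.exists_subset_card_eq hX.1
    obtain ⟨S', hS', hcard'⟩ := Finset.exists_subset_card_eq hX.2
    rw [mem_biUnion]
    refine ⟨(S, S'), mem_product.mpr
      ⟨mem_powersetCard.mpr ⟨hS.trans (filter_subset _ _), hcard⟩,
       mem_powersetCard.mpr ⟨hS'.trans (filter_subset _ _), hcard'⟩⟩, ?_⟩
    refine mem_filter.mpr ⟨mem_univ _, fun w hw => ?_⟩
    rcases mem_union.mp hw with h | h
    · exact (mem_filter.mp (hS h)).2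
    · exact (mem_filter.mp (hS' h)).2
  calc (univ.filter fun z : Fin m → Fin n => X r e z ∧ X r e' z).card
      ≤ _ := card_le_card hsub
    _ ≤ ∑ S ∈ e.powersetCard r ×ˢ e'.powersetCard r,
        (univ.filter fun z : Fin m → Fin n => ∀ w ∈ S.1 ∪ S.2, ∃ i, z i = w).card :=
        card_biUnion_le
    _ ≤ ∑ S ∈ e.powersetCard r ×ˢ e'.powersetCard r, m ^ (2*r) * n ^ (m - 2*r) := by
        apply Finset.sum_le_sum
        rintro ⟨S, S'⟩ hS
        rw [mem_product] at hS
        have h1 : S ⊆ e := (mem_powersetCard.mp hS.1).1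
        have h2 : S' ⊆ e' := (mem_powersetCard.mp hS.2).1
        have hdisj : Disjoint S S' := hd.mono h1 h2
        have hcard : (S ∪ S').card = 2 * r := by
          rw [card_union_of_disjoint hdisj, (mem_powersetCard.mp hS.1).2,
            (mem_powersetCard.mp hS.2).2, two_mul]
        have := card_cover_le (m := m) (S ∪ S')
        rwa [hcard] at this
    _ = ((2*r).choose r * (2*r).choose r) * (m ^ (2*r) * n ^ (m - 2*r)) := by
        rw [Finset.sum_const, card_product, card_powersetCard, card_powersetCard, he, he',
          smul_eq_mul]



noncomputable def pairs (e : Finset (Fin n)) (he : e.card = 2*r) (G : (Fin m → Fin n) → Prop) :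
    Finset ((Fin m → Fin n) × (Fin m → Fin n)) :=
  (univ : Finset (Fin r ↪ Fin m)).biUnion fun P =>
    ((block e he P).filter fun z => G z ∧ G (phi e he P z)).image fun z => (z, phi e he P z)

lemma mem_pairs {e : Finset (Fin n)} {he : e.card = 2*r} {G : (Fin m → Fin n) → Prop}
    {p : (Fin m → Fin n) × (Fin m → Fin n)} :
    p ∈ pairs e he G ↔ ∃ P : Fin r ↪ Fin m,
      p.1 ∈ block e he P ∧ G p.1 ∧ G p.2 ∧ p.2 = phi e he P p.1 := by
  constructor
  · intro hp
    obtain ⟨P, _, hmem⟩ := mem_biUnion.mp hp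
    obtain ⟨z, hz, hzp⟩ := mem_image.mp hmem
    rw [mem_filter] at hz
    refine ⟨P, ?_, ?_, ?_, ?_⟩ <;> rw [← hzp] <;> simp [hz.1, hz.2.1, hz.2.2]
  · rintro ⟨P, h1, h2, h3, h4⟩
    apply mem_biUnion.mpr
    refine ⟨P, mem_univ _, mem_image.mpr ⟨p.1, mem_filter.mpr ⟨h1, h2, h4 ▸ h3⟩, ?_⟩⟩
    rw [← h4]

lemma card_pairs_eq (e : Finset (Fin n)) (he : e.card = 2*r) (G : (Fin m → Fin n) → Prop) :
    (pairs e he G).card = ∑ P : Fin r ↪ Fin m,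
      ((block e he P).filter fun z => G z ∧ G (phi e he P z)).card := by
  rw [pairs, card_biUnion]
  · apply Finset.sum_congr rfl
    intro P _
    apply card_image_of_injOn
    intro z _ z' _ hzz
    exact congrArg Prod.fst hzz
  · intro P _ P' _ hPP
    dsimp only [Function.onFun]
    rw [Finset.disjoint_left]
    intro p hp hp'
    obtain ⟨z, hz, hzp⟩ := mem_image.mp hp
    obtain ⟨z', hz', hzp'⟩ := mem_image.mp hp'
    rw [mem_filter] at hz hz'
    apply hPP
    have h1 : z = z' := by
      have := congrArg Prod.fst (hzp.trans hzp'.symm)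
      exact this
    subst h1
    exact block_unique hz.1 hz'.1

lemma sum_badL_le (e : Finset (Fin n)) (he : e.card = 2*r) (G : (Fin m → Fin n) → Prop) :
    ∑ P : Fin r ↪ Fin m, ((block e he P).filter fun z => ¬ G z).card
      ≤ (univ.filter fun z : Fin m → Fin n => X r e z ∧ ¬ G z).card := by
  rw [← card_biUnion]
  · apply card_le_card
    intro z hz
    obtain ⟨P, _, hmem⟩ := mem_biUnion.mp hz
    rw [mem_filter] at hmem
    exact mem_filter.mpr ⟨mem_univ _, X_of_block hmem.1, hmem.2⟩
  · intro P _ P' _ hPP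
    dsimp only [Function.onFun]
    rw [Finset.disjoint_left]
    intro z hz hz'
    exact hPP (block_unique (mem_filter.mp hz).1 (mem_filter.mp hz').1)

lemma sum_badR_le (e : Finset (Fin n)) (he : e.card = 2*r) (G : (Fin m → Fin n) → Prop) :
    ∑ P : Fin r ↪ Fin m, ((block e he P).filter fun z => ¬ G (phi e he P z)).card
      ≤ (univ.filter fun z : Fin m → Fin n => X r e z ∧ ¬ G z).card := by
  have himg : ∀ P : Fin r ↪ Fin m,
      ((block e he P).filter fun z => ¬ G (phi e he P z)).card
      = (((block e he P).filter fun z => ¬ G (phi e he P z)).image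
          (fun z => phi e he P z)).card := by
    intro P
    rw [card_image_of_injOn]
    intro z hz z' hz' hzz
    exact (phi_unique (mem_filter.mp hz).1 (mem_filter.mp hz').1 hzz).2
  simp_rw [himg]
  rw [← card_biUnion]
  · apply card_le_card
    intro w hw
    obtain ⟨P, _, hmem⟩ := mem_biUnion.mp hw
    obtain ⟨z, hz, hzw⟩ := mem_image.mp hmem
    rw [mem_filter] at hz
    exact mem_filter.mpr ⟨mem_univ _, hzw ▸ X_of_phi hz.1, hzw ▸ hz.2⟩
  · intro P _ P' _ hPP
    dsimp only [Function.onFun]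
    rw [Finset.disjoint_left]
    intro w hw hw'
    obtain ⟨z, hz, hzw⟩ := mem_image.mp hw
    obtain ⟨z', hz', hzw'⟩ := mem_image.mp hw'
    exact hPP (phi_unique (mem_filter.mp hz).1 (mem_filter.mp hz').1
      (hzw.trans hzw'.symm)).1

lemma block_card_split (e : Finset (Fin n)) (he : e.card = 2*r) (P : Fin r ↪ Fin m)
    (G : (Fin m → Fin n) → Prop) :
    (block e he P).card ≤ ((block e he P).filter fun z => G z ∧ G (phi e he P z)).card
      + (((block e he P).filter fun z => ¬ G z).card
      + ((block e he P).filter fun z => ¬ G (phi e he P z)).card) := by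
  have hsub : block e he P ⊆
      ((block e he P).filter fun z => G z ∧ G (phi e he P z))
      ∪ (((block e he P).filter fun z => ¬ G z)
      ∪ ((block e he P).filter fun z => ¬ G (phi e he P z))) := by
    intro z hz
    by_cases h1 : G z
    · by_cases h2 : G (phi e he P z)
      · exact mem_union_left _ (mem_filter.mpr ⟨hz, h1, h2⟩)
      · exact mem_union_right _ (mem_union_right _ (mem_filter.mpr ⟨hz, h2⟩))
    · exact mem_union_right _ (mem_union_left _ (mem_filter.mpr ⟨hz, h1⟩))
  calc (block e he P).card ≤ _ := card_le_card hsub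
    _ ≤ _ := (card_union_le _ _).trans (by
        exact Nat.add_le_add_left (card_union_le _ _) _)

lemma block_card_ge (e : Finset (Fin n)) (he : e.card = 2*r) (P : Fin r ↪ Fin m) :
    (n - 2*r) ^ (m - r) ≤ (block e he P).card := by
  set Pc : Finset (Fin m) := univ \ univ.image (fun i : Fin r => P i) with hPc
  have hmemPc : ∀ {j : Fin m}, ¬ (∃ i, P i = j) → j ∈ Pc := by
    intro j h
    rw [hPc, mem_sdiff]
    refine ⟨mem_univ _, ?_⟩
    rw [mem_image]
    rintro ⟨i, _, hi⟩
    exact h ⟨i, hi⟩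
  have hcardPc : Pc.card = m - r := by
    rw [hPc, card_sdiff_of_subset (subset_univ _), card_univ, Fintype.card_fin,
      card_image_of_injective _ P.injective, card_univ, Fintype.card_fin]
  have hcardE : ((univ : Finset (Fin n)) \ e).card = n - 2*r := by
    rw [card_sdiff_of_subset (subset_univ _), card_univ, Fintype.card_fin, he]
  set F : (↥Pc → ↥((univ : Finset (Fin n)) \ e)) → (Fin m → Fin n) :=
    fun f j => if h : ∃ i, P i = j then en e he (iA r h.choose) else
      ↑(f ⟨j, hmemPc h⟩) with hF
  have hFmem : ∀ f, F f ∈ block e he P := by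
    intro f
    rw [mem_block]
    constructor
    · intro i
      have h : ∃ i', P i' = P i := ⟨i, rfl⟩
      have hch : h.choose = i := P.injective h.choose_spec
      show dite _ _ _ = _
      rw [dif_pos h, hch]
    · intro j hj
      have h : ¬ ∃ i, P i = j := by rintro ⟨i, hi⟩; exact hj i hi
      show dite _ _ _ ∉ e
      rw [dif_neg h]
      have h2 := (f ⟨j, hmemPc h⟩).2
      exact (mem_sdiff.mp h2).2
  have hFinj : Function.Injective F := by
    intro f f' hff
    funext j
    apply Subtype.ext
    have h : ¬ ∃ i, P i = ↑j := by
      rintro ⟨i, hi⟩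
      have hj2 : (↑j : Fin m) ∈ Pc := j.2
      exact (mem_sdiff.mp hj2).2 (mem_image.mpr ⟨i, mem_univ _, hi⟩)
    have h1 : F f ↑j = ↑(f ⟨↑j, hmemPc h⟩) := by
      show dite _ _ _ = _
      rw [dif_neg h]
    have h2 : F f' ↑j = ↑(f' ⟨↑j, hmemPc h⟩) := by
      show dite _ _ _ = _
      rw [dif_neg h]
    have hjeq : (⟨↑j, hmemPc h⟩ : ↥Pc) = j := Subtype.ext rfl
    rw [hjeq] at h1 h2
    rw [← h1, ← h2, hff]
  calc (n - 2*r) ^ (m - r)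
      = Fintype.card (↥Pc → ↥((univ : Finset (Fin n)) \ e)) := by
        rw [Fintype.card_fun, Fintype.card_coe, Fintype.card_coe, hcardPc, hcardE]
    _ ≤ (block e he P).card := by
        have hle : Fintype.card (↥Pc → ↥((univ : Finset (Fin n)) \ e))
            ≤ Fintype.card ↥(block e he P) :=
          Fintype.card_le_of_injective (fun f => ⟨F f, hFmem f⟩)
            (fun f f' hff => hFinj (congrArg Subtype.val hff))
        rwa [Fintype.card_coe] at hle

lemma pair_prod (e : Finset (Fin n)) (he : e.card = 2*r) (P : Fin r ↪ Fin m)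
    {z : Fin m → Fin n} (hz : z ∈ block e he P) (x : Fin n → ℝ)
    (hx : ∀ i, x i = 1 ∨ x i = -1) :
    (∏ j, x (phi e he P z j)) * (∏ j, x (z j)) = ∏ w ∈ e, x w := by
  set Q : Finset (Fin m) := univ.image (fun i : Fin r => P i) with hQ
  have hsplit : ∀ y : Fin m → Fin n,
      (∏ j, x (y j)) = (∏ i : Fin r, x (y (P i))) * ∏ j ∈ Qᶜ, x (y j) := by
    intro y
    rw [← Finset.prod_mul_prod_compl Q (fun j => x (y j))]
    congr 1
    rw [hQ, Finset.prod_image]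
    intro a _ b _ hab
    exact P.injective hab
  have hoffQ : ∀ j ∈ Qᶜ, phi e he P z j = z j := by
    intro j hj
    apply phi_off
    intro i hi
    rw [Finset.mem_compl, hQ] at hj
    exact hj (mem_image.mpr ⟨i, mem_univ _, hi⟩)
  rw [hsplit (phi e he P z), hsplit z]
  have hsq : (∏ j ∈ Qᶜ, x (phi e he P z j)) * (∏ j ∈ Qᶜ, x (z j)) = 1 := by
    rw [← Finset.prod_mul_distrib]
    apply Finset.prod_eq_one
    intro j hj
    rw [hoffQ j hj]
    rcases hx (z j) with h | h <;> rw [h] <;> norm_num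
  have hφP : ∀ i : Fin r, phi e he P z (P i) = en e he (iB r i) := phi_at_P e he P z
  have hzP : ∀ i : Fin r, z (P i) = en e he (iA r i) := (mem_block.mp hz).1
  calc ((∏ i : Fin r, x (phi e he P z (P i))) * ∏ j ∈ Qᶜ, x (phi e he P z j))
        * ((∏ i : Fin r, x (z (P i))) * ∏ j ∈ Qᶜ, x (z j))
      = ((∏ i : Fin r, x (en e he (iB r i))) * (∏ i : Fin r, x (en e he (iA r i))))
        * ((∏ j ∈ Qᶜ, x (phi e he P z j)) * (∏ j ∈ Qᶜ, x (z j))) := by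
        simp_rw [hφP, hzP]; ring
    _ = (∏ i : Fin r, x (en e he (iB r i))) * (∏ i : Fin r, x (en e he (iA r i))) := by
        rw [hsq, mul_one]
    _ = ∏ k : Fin (2*r), x (en e he k) := by
        have huniv : (univ : Finset (Fin (2*r)))
            = univ.image (iA r) ∪ univ.image (iB r) := by
          ext k
          simp only [mem_univ, true_iff, mem_union, mem_image]
          by_cases hk : (k : ℕ) < r
          · left; exact ⟨⟨k, hk⟩, trivial, by simp [iA]⟩
          · right
            refine ⟨⟨(k : ℕ) - r, by have := k.2; omega⟩, trivial, ?_⟩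
            simp only [iB]
            apply Fin.ext
            simp
            omega
        have hdisj : Disjoint (univ.image (iA r)) (univ.image (iB r)) := by
          rw [Finset.disjoint_left]
          intro k hk hk'
          obtain ⟨i, _, hi⟩ := mem_image.mp hk
          obtain ⟨i', _, hi'⟩ := mem_image.mp hk'
          exact iA_ne_iB i i' (hi.trans hi'.symm)
        rw [huniv, Finset.prod_union hdisj, Finset.prod_image (by
            intro a _ b _ hab; exact iA_inj hab), Finset.prod_image (by
            intro a _ b _ hab; exact iB_inj hab)]
        ring
    _ = ∏ w ∈ e, x w := by
        rw [← Finset.prod_coe_sort e (fun w => x ↑w)]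
        exact Equiv.prod_comp (e.orderIsoOfFin he).toEquiv (fun w : ↥e => x ↑w)
variable {n r m : ℕ}

lemma edge_selection (hr : 0 < r) (e : Finset (Fin n)) (he : e.card = 2*r)
    (G : (Fin m → Fin n) → Prop)
    (hcap : 2 * n ^ (m-1) ≤ (m.descFactorial r) * (n - 2*r) ^ (m - r))
    (hbad : 2 * (univ.filter fun z : Fin m → Fin n => X r e z ∧ ¬ G z).card ≤ n ^ (m-1)) :
    ∃ Se : Finset ((Fin m → Fin n) × (Fin m → Fin n)),
      Se.card = n ^ (m-1) ∧
      (∀ p ∈ Se, G p.1 ∧ G p.2 ∧ X r e p.1 ∧ X r e p.2 ∧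
        ∀ x : Fin n → ℝ, (∀ i, x i = 1 ∨ x i = -1) →
          (∏ j, x (p.2 j)) * (∏ j, x (p.1 j)) = ∏ w ∈ e, x w) ∧
      (∀ z v v', (z,v) ∈ Se → (z,v') ∈ Se → v = v') ∧
      (∀ z v v', (v,z) ∈ Se → (v',z) ∈ Se → v = v') := by
  classical
  set β := (univ.filter fun z : Fin m → Fin n => X r e z ∧ ¬ G z).card with hβ
  have hgood : n ^ (m-1) ≤ (pairs e he G).card := by
    have h1 : ∑ P : Fin r ↪ Fin m, (block e he P).card ≤ (pairs e he G).card + (β + β) := by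
      calc ∑ P : Fin r ↪ Fin m, (block e he P).card
          ≤ ∑ P : Fin r ↪ Fin m,
            (((block e he P).filter fun z => G z ∧ G (phi e he P z)).card
              + ((((block e he P).filter fun z => ¬ G z).card
              + ((block e he P).filter fun z => ¬ G (phi e he P z)).card))) :=
            Finset.sum_le_sum fun P _ => block_card_split e he P G
        _ = (∑ P : Fin r ↪ Fin m,
              ((block e he P).filter fun z => G z ∧ G (phi e he P z)).card)
            + ((∑ P : Fin r ↪ Fin m, ((block e he P).filter fun z => ¬ G z).card)
            + (∑ P : Fin r ↪ Fin m,
              ((block e he P).filter fun z => ¬ G (phi e he P z)).card)) := by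
            rw [Finset.sum_add_distrib, Finset.sum_add_distrib]
        _ ≤ (pairs e he G).card + (β + β) := by
            have hL := sum_badL_le e he G
            have hR := sum_badR_le e he G
            have hP := (card_pairs_eq e he G).symm
            omega
    have h2 : 2 * n ^ (m-1) ≤ ∑ P : Fin r ↪ Fin m, (block e he P).card := by
      calc 2 * n ^ (m-1) ≤ (m.descFactorial r) * (n - 2*r) ^ (m - r) := hcap
        _ = ∑ _P : Fin r ↪ Fin m, (n - 2*r) ^ (m - r) := by
            rw [Finset.sum_const, card_univ, Fintype.card_embedding_eq, Fintype.card_fin,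
              Fintype.card_fin, smul_eq_mul]
        _ ≤ _ := Finset.sum_le_sum fun P _ => block_card_ge e he P
    omega
  obtain ⟨Se, hsub, hcard⟩ := Finset.exists_subset_card_eq hgood
  refine ⟨Se, hcard, ?_, ?_, ?_⟩
  · intro p hp
    obtain ⟨P, hbl, hG1, hG2, hp2⟩ := mem_pairs.mp (hsub hp)
    refine ⟨hG1, hG2, X_of_block hbl, hp2 ▸ X_of_phi hbl, ?_⟩
    intro x hx
    rw [hp2]
    exact pair_prod e he P hbl x hx
  · intro z v v' h1 h2
    obtain ⟨P, hb, _, _, hp2⟩ := mem_pairs.mp (hsub h1)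
    obtain ⟨P', hb', _, _, hp2'⟩ := mem_pairs.mp (hsub h2)
    simp only at hp2 hp2' hb hb'
    have : P = P' := block_unique hb hb'
    rw [hp2, hp2', this]
  · intro z v v' h1 h2
    obtain ⟨P, hb, _, _, hp2⟩ := mem_pairs.mp (hsub h1)
    obtain ⟨P', hb', _, _, hp2'⟩ := mem_pairs.mp (hsub h2)
    simp only at hp2 hp2' hb hb'
    exact (phi_unique hb hb' (hp2.symm.trans hp2')).2

lemma numeric_facts (r n m : ℕ) (hr : 0 < r) (hn : (36*r)^(2*r) ≤ n)
    (hm : m = ⌈(8:ℝ) * (n:ℝ) ^ ((1:ℝ) - 1/(r:ℝ))⌉₊) :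
    8^r * n^(r-1) ≤ m^r ∧ m^r ≤ 9^r * n^(r-1) ∧ 4*r*m ≤ n ∧ 2*r ≤ m := by
  have hr1 : (1:ℝ) ≤ (r:ℝ) := by exact_mod_cast hr
  have hrne : (r:ℝ) ≠ 0 := by positivity
  have hn1 : 1 ≤ n := le_trans (Nat.one_le_pow _ _ (by positivity)) hn
  have hnR : (1:ℝ) ≤ (n:ℝ) := by exact_mod_cast hn1
  have hexp : (0:ℝ) ≤ 1 - 1/(r:ℝ) := by
    have : 1/(r:ℝ) ≤ 1 := by
      rw [div_le_one (by positivity)]; exact hr1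
    linarith
  set ν : ℝ := (n:ℝ) ^ ((1:ℝ) - 1/(r:ℝ)) with hν
  have hν0 : 0 ≤ ν := Real.rpow_nonneg (by positivity) _
  have hν1 : (1:ℝ) ≤ ν := by
    rw [hν]
    calc (1:ℝ) = (n:ℝ) ^ (0:ℝ) := by rw [Real.rpow_zero]
    _ ≤ _ := Real.rpow_le_rpow_of_exponent_le hnR hexp
  have hmlb : 8 * ν ≤ (m:ℝ) := by rw [hm]; exact_mod_cast Nat.le_ceil _
  have hmub : (m:ℝ) ≤ 9 * ν := by
    rw [hm]
    have h1 : (⌈8 * ν⌉₊ : ℝ) < 8 * ν + 1 := Nat.ceil_lt_add_one (by positivity)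
    have : 8 * ν + 1 ≤ 9 * ν := by linarith
    linarith
  have hνr : ν ^ r = (n:ℝ) ^ (r - 1 : ℕ) := by
    rw [hν, ← Real.rpow_natCast ((n:ℝ) ^ ((1:ℝ) - 1/(r:ℝ))) r, ← Real.rpow_mul (by positivity)]
    have hee : ((1:ℝ) - 1/(r:ℝ)) * (r:ℝ) = ((r - 1 : ℕ) : ℝ) := by
      rw [Nat.cast_sub hr]
      field_simp
      norm_num
    rw [hee, Real.rpow_natCast]
  have f1 : 8^r * n^(r-1) ≤ m^r := by
    have : (8 * ν) ^ r ≤ (m:ℝ) ^ r := pow_le_pow_left₀ (by positivity) hmlb r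
    rw [mul_pow, hνr] at this
    exact_mod_cast this
  have f2 : m^r ≤ 9^r * n^(r-1) := by
    have : (m:ℝ) ^ r ≤ (9 * ν) ^ r := pow_le_pow_left₀ (by positivity) hmub r
    rw [mul_pow, hνr] at this
    exact_mod_cast this
  have hq : (36 * r : ℝ) ≤ (n:ℝ) ^ ((1:ℝ)/(r:ℝ)) := by
    have h0 : ((36*r : ℕ) : ℝ) ^ (r:ℕ) ≤ (n:ℝ) := by
      calc ((36*r : ℕ):ℝ) ^ (r:ℕ) = (((36*r)^r : ℕ) : ℝ) := by push_cast; ring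
        _ ≤ (((36*r)^(2*r) : ℕ) : ℝ) := by
            have : (36*r)^r ≤ (36*r)^(2*r) :=
              Nat.pow_le_pow_right (by positivity) (by omega)
            exact_mod_cast this
        _ ≤ (n:ℝ) := by exact_mod_cast hn
    have h1 : (((36*r:ℕ):ℝ) ^ (r:ℕ)) ^ ((1:ℝ)/(r:ℝ)) ≤ (n:ℝ) ^ ((1:ℝ)/(r:ℝ)) :=
      Real.rpow_le_rpow (by positivity) h0 (by positivity)
    calc (36 * r : ℝ) = (((36*r:ℕ):ℝ) ^ (r:ℕ)) ^ ((1:ℝ)/(r:ℝ)) := by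
          rw [← Real.rpow_natCast ((36*r:ℕ):ℝ) r, ← Real.rpow_mul (by positivity)]
          rw [mul_one_div, div_self hrne, Real.rpow_one]
          push_cast; ring
      _ ≤ _ := h1
  have hsplit : ν * (n:ℝ) ^ ((1:ℝ)/(r:ℝ)) = (n:ℝ) := by
    rw [hν, ← Real.rpow_add (by positivity)]
    norm_num
  have f3 : 4*r*m ≤ n := by
    have : (4*r*m : ℝ) ≤ (n:ℝ) := by
      calc (4*r*m : ℝ) ≤ 4*r*(9*ν) := by
            apply mul_le_mul_of_nonneg_left hmub (by positivity)
        _ = ν * (36*r) := by ring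
        _ ≤ ν * ((n:ℝ) ^ ((1:ℝ)/(r:ℝ))) := by
            apply mul_le_mul_of_nonneg_left hq hν0
        _ = (n:ℝ) := hsplit
    exact_mod_cast this
  have f4 : 2*r ≤ m := by
    have h2r : (2*r)^r ≤ 8^r * n^(r-1) := by
      rcases Nat.eq_or_lt_of_le hr with h | h
      · -- r = 1
        rw [← h]
        simpa using hn1.trans (Nat.le_mul_of_pos_left n (by positivity))
      · -- r ≥ 2
        have hrr : 2 ≤ r := h
        have ha : (2*r)^r ≤ n := by
          have h1 : (2*r)^r ≤ (36*r)^r := Nat.pow_le_pow_left (by omega) r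
          have h2 : (36*r)^r ≤ (36*r)^(2*r) :=
            Nat.pow_le_pow_right (by positivity) (by omega)
          omega
        have hb : n ≤ n^(r-1) := by
          calc n = n^1 := (pow_one n).symm
            _ ≤ n^(r-1) := Nat.pow_le_pow_right hn1 (by omega)
        calc (2*r)^r ≤ n := ha
          _ ≤ n^(r-1) := hb
          _ ≤ 8^r * n^(r-1) := Nat.le_mul_of_pos_left _ (by positivity)
    have : (2*r)^r ≤ m^r := h2r.trans f1
    exact (Nat.pow_le_pow_iff_left (by omega)).mp this
  exact ⟨f1, f2, f3, f4⟩
lemma mcast_sum {α : Type*} (E : Multiset α) (f : α → ℕ) :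
    (((E.map f).sum : ℕ) : ℝ) = (E.map fun e => ((f e : ℕ) : ℝ)).sum := by
  induction E using Multiset.induction_on with
  | empty => simp
  | cons e E ih => simp [ih]

theorem matrix_lemma (r : ℕ) (hr : 0 < r) :
    ∃ C c K : ℝ, 0 < C ∧ 0 < c ∧ 0 < K ∧
      ∃ n₀ : ℕ, ∀ n : ℕ, n₀ ≤ n →
        ∀ m : ℕ, m = ⌈C * (n : ℝ) ^ ((1 : ℝ) - 1 / (r : ℝ))⌉₊ →
          ∀ N : ℕ, N = n ^ m →
            ∀ E : Multiset (Finset (Fin n)), (∀ e ∈ E, e.card = 2 * r) →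
              ∃ B : (Fin m → Fin n) → (Fin m → Fin n) → ℕ,
                (∀ u v, B u v = B v u) ∧
                opNorm (Matrix.of fun u v : Fin m → Fin n => (B u v : ℝ)) ≤
                  K * (Finset.univ.sup fun w : Fin n =>
                        Multiset.countP (fun e => w ∈ e) E) ∧
                ∀ x : Fin n → ℝ, (∀ i, x i = 1 ∨ x i = -1) →
                  (E.map fun e => ∏ i ∈ e, x i).sum =
                    ((n : ℝ) / (c * N)) *
                      ∑ u : Fin m → Fin n, ∑ v : Fin m → Fin n,
                        (B u v : ℝ) * (∏ i, x (v i)) * (∏ i, x (u i)) := by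
  classical
  set c2r : ℕ := (2*r).choose r with hc2r
  have hc2rpos : 0 < c2r := Nat.choose_pos (by omega)
  set K9 : ℕ := c2r * c2r * 81 ^ r + 2 * r * (c2r * 9 ^ r) with hK9
  have hK9pos : 0 < K9 := by positivity
  set T : ℕ := 2 * K9 with hT
  have hTpos : 0 < T := by positivity
  refine ⟨8, 2, ((2*T : ℕ) : ℝ), by norm_num, by norm_num, by positivity,
    (36*r)^(2*r), ?_⟩
  intro n hn m hm N hN E hE
  obtain ⟨f1, f2, f3, f4⟩ := numeric_facts r n m hr hn hm
  have hn1 : 1 ≤ n := le_trans (Nat.one_le_pow _ _ (by positivity)) hn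
  have hm1 : 1 ≤ m := by omega
  have hrm : r ≤ m := by omega
  -- squared upper bound for m ^ (2r)
  have f2sq : m^(2*r) ≤ 81^r * n^(2*r-2) := by
    have h1 : (m^r)^2 ≤ (9^r * n^(r-1))^2 := Nat.pow_le_pow_left f2 2
    have h2 : (m^r)^2 = m^(2*r) := by rw [← pow_mul]; ring_nf
    have h9 : (9:ℕ)^(r*2) = 81^r := by
      rw [mul_comm, pow_mul]
      norm_num
    have hnn : (n:ℕ)^((r-1)*2) = n^(2*r-2) := by congr 1; omega
    have h3 : (9^r * n^(r-1))^2 = 81^r * n^(2*r-2) := by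
      rw [mul_pow, ← pow_mul, ← pow_mul, h9, hnn]
    rw [h2, h3] at h1
    exact h1
  -- the degree and goodness setup
  set Δ : ℕ := Finset.univ.sup (fun w : Fin n => Multiset.countP (fun e => w ∈ e) E) with hΔ
  have hdeg : ∀ w : Fin n, Multiset.countP (fun e => w ∈ e) E ≤ Δ := by
    intro w
    rw [hΔ]
    exact Finset.le_sup (f := fun w : Fin n => Multiset.countP (fun e => w ∈ e) E) (mem_univ w)
  set elig : (Fin m → Fin n) → ℕ := fun z => E.countP (fun e' => X r e' z) with helig
  obtain ⟨G, hGdef⟩ : ∃ G : (Fin m → Fin n) → Prop, ∀ z, G z ↔ elig z ≤ T * Δ :=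
    ⟨fun z => elig z ≤ T * Δ, fun z => Iff.rfl⟩
  -- total size of E
  have hcardE : Multiset.card E ≤ n * Δ := by
    have h1 : ∀ e' ∈ E, e'.card = ∑ w : Fin n, (if w ∈ e' then 1 else 0) := by
      intro e' _
      rw [← Finset.card_filter, Finset.filter_univ_mem]
    have h2 : (E.map fun e' => e'.card).sum = ∑ w : Fin n, Multiset.countP (fun e => w ∈ e) E := by
      rw [Multiset.map_congr rfl h1, ← msum_swap]
      exact Finset.sum_congr rfl fun w _ => mcountP_eq E (fun e => w ∈ e)
    have h3 : (E.map fun e' => e'.card).sum = 2*r*(Multiset.card E) := by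
      have : (E.map fun e' => e'.card) = (E.map fun _ => 2*r) := Multiset.map_congr rfl hE
      rw [this, msum_const]
    have h4 : ∑ w : Fin n, Multiset.countP (fun e => w ∈ e) E ≤ ∑ _w : Fin n, Δ :=
      Finset.sum_le_sum fun w _ => hdeg w
    have h5 : ∑ _w : Fin n, Δ = n * Δ := by
      rw [Finset.sum_const, card_univ, Fintype.card_fin, smul_eq_mul]
    have h6 : 2*r*(Multiset.card E) ≤ n * Δ := by
      rw [← h3, h2]
      exact h4.trans (le_of_eq h5)
    calc Multiset.card E ≤ 2*r*(Multiset.card E) :=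
          Nat.le_mul_of_pos_left _ (by omega)
      _ ≤ n * Δ := h6
  -- edges intersecting a fixed edge
  have hcountInt : ∀ e : Finset (Fin n),
      E.countP (fun e' => ¬ Disjoint e e') ≤ e.card * Δ := by
    intro e
    have h1 : (E.map fun e' => if ¬ Disjoint e e' then 1 else 0).sum
        ≤ (E.map fun e' => ∑ w ∈ e, if w ∈ e' then 1 else 0).sum := by
      apply msum_le
      intro e' _
      by_cases hd : Disjoint e e'
      · simp [hd]
      · rw [if_pos hd]
        obtain ⟨w, hw, hw'⟩ := Finset.not_disjoint_iff.mp hd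
        calc 1 = (if w ∈ e' then 1 else 0) := by rw [if_pos hw']
          _ ≤ ∑ w ∈ e, if w ∈ e' then 1 else 0 :=
            Finset.single_le_sum (f := fun w => if w ∈ e' then (1:ℕ) else 0)
              (fun _ _ => Nat.zero_le _) hw
    have h2 : (E.map fun e' => ∑ w ∈ e, if w ∈ e' then 1 else 0).sum
        = ∑ w ∈ e, Multiset.countP (fun e' => w ∈ e') E := by
      rw [← msum_swap]
      exact Finset.sum_congr rfl fun w _ => mcountP_eq E _
    calc E.countP (fun e' => ¬ Disjoint e e')
        = (E.map fun e' => if ¬ Disjoint e e' then 1 else 0).sum := (mcountP_eq E _).symm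
      _ ≤ ∑ w ∈ e, Multiset.countP (fun e' => w ∈ e') E := h1.trans (le_of_eq h2)
      _ ≤ ∑ _w ∈ e, Δ := Finset.sum_le_sum fun w _ => hdeg w
      _ = e.card * Δ := by rw [Finset.sum_const, smul_eq_mul]
  -- capacity bound
  have f1' : 4^r * n^(r-1) ≤ (m+1-r)^r := by
    have h1 : m ≤ 2*(m+1-r) := by omega
    have h2 : m^r ≤ 2^r * (m+1-r)^r := by
      calc m^r ≤ (2*(m+1-r))^r := Nat.pow_le_pow_left h1 r
        _ = 2^r * (m+1-r)^r := mul_pow _ _ _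
    have h3 : 2^r*(4^r*n^(r-1)) = 8^r * n^(r-1) := by
      rw [← mul_assoc, ← mul_pow]
      norm_num
    have h4 : 2^r*(4^r*n^(r-1)) ≤ 2^r*((m+1-r)^r) := by
      rw [h3]; exact f1.trans h2
    exact Nat.le_of_mul_le_mul_left h4 (by positivity)
  have f5 : n^(m-r) ≤ 2*(n-2*r)^(m-r) := by
    apply pow_sub_half
    have ha : (m-r)*(2*r) ≤ m*(2*r) := Nat.mul_le_mul_right _ (Nat.sub_le _ _)
    have hb : 2*(m*(2*r)) = 4*r*m := by ring
    omega
  have hcap : 2 * n^(m-1) ≤ m.descFactorial r * (n-2*r)^(m-r) := by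
    have hDF : (m+1-r)^r ≤ m.descFactorial r := Nat.pow_sub_le_descFactorial m r
    have hpow : n^(r-1) * n^(m-r) = n^(m-1) := by
      rw [← pow_add]; congr 1; omega
    have h4 : (4:ℕ) ≤ 4^r := by
      calc (4:ℕ) = 4^1 := (pow_one 4).symm
        _ ≤ 4^r := Nat.pow_le_pow_right (by norm_num) hr
    have key : 2*(2*n^(m-1)) ≤ 2*((m+1-r)^r * (n-2*r)^(m-r)) := by
      calc 2*(2*n^(m-1)) = 4*n^(m-1) := by ring
        _ ≤ 4^r * n^(m-1) := Nat.mul_le_mul_right _ h4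
        _ = (4^r * n^(r-1)) * n^(m-r) := by rw [mul_assoc, hpow]
        _ ≤ (m+1-r)^r * (2*(n-2*r)^(m-r)) := Nat.mul_le_mul f1' f5
        _ = 2*((m+1-r)^r * (n-2*r)^(m-r)) := by ring
    have hh := Nat.le_of_mul_le_mul_left key (by norm_num)
    exact hh.trans (Nat.mul_le_mul_right _ hDF)
  -- per-edge bad-set bound
  have hbadE : ∀ e ∈ E,
      2 * (univ.filter fun z : Fin m → Fin n => X r e z ∧ ¬ G z).card ≤ n^(m-1) := by
    intro e hee
    have he := hE e hee
    set Bad := univ.filter fun z : Fin m → Fin n => X r e z ∧ ¬ G z with hBad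
    set Xset := univ.filter fun z : Fin m → Fin n => X r e z with hXset
    -- Markov
    have hM : Bad.card * (T*Δ+1) ≤ ∑ z ∈ Bad, elig z := by
      have h := Finset.card_nsmul_le_sum Bad elig (T*Δ+1) ?_
      · rwa [smul_eq_mul] at h
      · intro z hz
        have h2 := (mem_filter.mp hz).2.2
        rw [hGdef z] at h2
        omega
    have hsub : Bad ⊆ Xset := by
      intro z hz
      exact mem_filter.mpr ⟨mem_univ _, (mem_filter.mp hz).2.1⟩
    have hmono : ∑ z ∈ Bad, elig z ≤ ∑ z ∈ Xset, elig z :=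
      Finset.sum_le_sum_of_subset hsub
    -- the second-moment style bound
    set DD : ℕ := c2r * c2r * (m^(2*r) * n^(m-2*r)) with hDD
    set DI : ℕ := c2r * (m^r * n^(m-r)) with hDI
    have hSN : ∑ z ∈ Xset, elig z ≤ K9 * Δ * n^(m-1) := by
      have h1 : ∑ z ∈ Xset, elig z
          = (E.map fun e' => (Xset.filter fun z => X r e' z).card).sum := by
        have ha : ∀ z ∈ Xset, elig z = (E.map fun e' => if X r e' z then 1 else 0).sum :=
          fun z _ => (mcountP_eq E _).symm
        rw [Finset.sum_congr rfl ha, msum_swap]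
        congr 1
        apply Multiset.map_congr rfl
        intro e' _
        rw [← Finset.card_filter]
      have h2 : (E.map fun e' => (Xset.filter fun z => X r e' z).card).sum
          ≤ (E.map fun e' => if Disjoint e e' then DD else DI).sum := by
        apply msum_le
        intro e' hee'
        have he' := hE e' hee'
        by_cases hd : Disjoint e e'
        · rw [if_pos hd]
          have : Xset.filter (fun z => X r e' z)
              = univ.filter fun z : Fin m → Fin n => X r e z ∧ X r e' z := by
            rw [hXset, Finset.filter_filter]
          rw [this, hDD]
          exact card_XX_le e e' he he' hd
        · rw [if_neg hd]
          calc (Xset.filter fun z => X r e' z).card ≤ Xset.card :=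
                card_le_card (filter_subset _ _)
            _ ≤ DI := by rw [hXset, hDI]; exact card_X_le e he
      have h3 : (E.map fun e' => if Disjoint e e' then DD else DI).sum
          = DD * E.countP (fun e' => Disjoint e e')
            + DI * E.countP (fun e' => ¬ Disjoint e e') := msum_ite E _ DD DI
      have h4 : DD * E.countP (fun e' => Disjoint e e') ≤ DD * (n * Δ) :=
        Nat.mul_le_mul_left _ ((Multiset.countP_le_card _ _).trans hcardE)
      have h5 : DI * E.countP (fun e' => ¬ Disjoint e e') ≤ DI * (2*r*Δ) := by
        apply Nat.mul_le_mul_left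
        have := hcountInt e
        rwa [he] at this
      have h6 : DD * (n * Δ) ≤ c2r * c2r * 81^r * Δ * n^(m-1) := by
        rw [hDD]
        have hee1 : m^(2*r) * n^(m-2*r) ≤ (81^r * n^(2*r-2)) * n^(m-2*r) :=
          Nat.mul_le_mul_right _ f2sq
        have hee2 : n^(2*r-2) * n^(m-2*r) * n = n^(m-1) := by
          rw [← pow_add, ← pow_succ]
          congr 1
          omega
        calc c2r * c2r * (m^(2*r) * n^(m-2*r)) * (n * Δ)
            ≤ c2r * c2r * ((81^r * n^(2*r-2)) * n^(m-2*r)) * (n * Δ) := by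
              apply Nat.mul_le_mul_right
              exact Nat.mul_le_mul_left _ hee1
          _ = c2r * c2r * 81^r * Δ * (n^(2*r-2) * n^(m-2*r) * n) := by ring
          _ = c2r * c2r * 81^r * Δ * n^(m-1) := by rw [hee2]
      have h7 : DI * (2*r*Δ) ≤ 2*r*(c2r * 9^r) * Δ * n^(m-1) := by
        rw [hDI]
        have hee1 : m^r * n^(m-r) ≤ (9^r * n^(r-1)) * n^(m-r) :=
          Nat.mul_le_mul_right _ f2
        have hee2 : n^(r-1) * n^(m-r) = n^(m-1) := by
          rw [← pow_add]; congr 1; omega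
        calc c2r * (m^r * n^(m-r)) * (2*r*Δ)
            ≤ c2r * ((9^r * n^(r-1)) * n^(m-r)) * (2*r*Δ) := by
              apply Nat.mul_le_mul_right
              exact Nat.mul_le_mul_left _ hee1
          _ = 2*r*(c2r * 9^r) * Δ * (n^(r-1) * n^(m-r)) := by ring
          _ = 2*r*(c2r * 9^r) * Δ * n^(m-1) := by rw [hee2]
      have h8 : c2r * c2r * 81^r * Δ * n^(m-1) + 2*r*(c2r * 9^r) * Δ * n^(m-1)
          = K9 * Δ * n^(m-1) := by rw [hK9]; ring
      omega
    -- combine Markov with the bound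
    have hfinal : Bad.card * (T*Δ+1) ≤ K9 * Δ * n^(m-1) := le_trans hM (hmono.trans hSN)
    have h1 : (T*Δ+1) * (2*Bad.card) ≤ (T*Δ+1) * n^(m-1) := by
      calc (T*Δ+1)*(2*Bad.card) = 2*(Bad.card*(T*Δ+1)) := by ring
        _ ≤ 2*(K9*Δ*n^(m-1)) := by omega
        _ = T*Δ*n^(m-1) := by rw [hT]; ring
        _ ≤ (T*Δ+1)*n^(m-1) := Nat.mul_le_mul_right _ (by omega)
    exact Nat.le_of_mul_le_mul_left h1 (by positivity)
  -- selection of the matchings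
  have hsel : ∀ e ∈ E, ∃ Se : Finset ((Fin m → Fin n) × (Fin m → Fin n)),
      Se.card = n ^ (m-1) ∧
      (∀ p ∈ Se, G p.1 ∧ G p.2 ∧ X r e p.1 ∧ X r e p.2 ∧
        ∀ x : Fin n → ℝ, (∀ i, x i = 1 ∨ x i = -1) →
          (∏ j, x (p.2 j)) * (∏ j, x (p.1 j)) = ∏ w ∈ e, x w) ∧
      (∀ z v v', (z,v) ∈ Se → (z,v') ∈ Se → v = v') ∧
      (∀ z v v', (v,z) ∈ Se → (v',z) ∈ Se → v = v') :=
    fun e hee => edge_selection hr e (hE e hee) G hcap (hbadE e hee)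
  choose! Sel hSel1 hSel2 hSel3 hSel4 using hsel
  set B : (Fin m → Fin n) → (Fin m → Fin n) → ℕ := fun u v =>
    (E.map fun e => (if (u,v) ∈ Sel e then 1 else 0) + (if (v,u) ∈ Sel e then 1 else 0)).sum
    with hB
  have hsym : ∀ u v, B u v = B v u := by
    intro u v
    rw [hB]
    simp only
    congr 1
    apply Multiset.map_congr rfl
    intro e _
    ring
  -- row sums
  have hrowN : ∀ z : Fin m → Fin n, ∑ v : Fin m → Fin n, B z v ≤ 2*(T*Δ) := by
    intro z
    rw [hB]
    simp only
    rw [msum_swap]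
    by_cases hGz : G z
    · calc (E.map fun e => ∑ v : Fin m → Fin n,
            ((if (z,v) ∈ Sel e then 1 else 0) + (if (v,z) ∈ Sel e then 1 else 0))).sum
          ≤ (E.map fun e => 2 * (if X r e z then 1 else 0)).sum := by
            apply msum_le
            intro e hee
            rw [Finset.sum_add_distrib, ← Finset.card_filter, ← Finset.card_filter]
            by_cases hX : X r e z
            · rw [if_pos hX]
              have h1 : (univ.filter fun v => (z,v) ∈ Sel e).card ≤ 1 := by
                rw [Finset.card_le_one]
                intro a ha b hb
                exact hSel3 e hee z a b (mem_filter.mp ha).2 (mem_filter.mp hb).2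
              have h2 : (univ.filter fun v => (v,z) ∈ Sel e).card ≤ 1 := by
                rw [Finset.card_le_one]
                intro a ha b hb
                exact hSel4 e hee z a b (mem_filter.mp ha).2 (mem_filter.mp hb).2
              omega
            · have h1 : (univ.filter fun v => (z,v) ∈ Sel e) = ∅ := by
                rw [Finset.filter_eq_empty_iff]
                intro v _ hmem
                exact hX ((hSel2 e hee _ hmem).2.2.1)
              have h2 : (univ.filter fun v => (v,z) ∈ Sel e) = ∅ := by
                rw [Finset.filter_eq_empty_iff]
                intro v _ hmem
                exact hX ((hSel2 e hee _ hmem).2.2.2.1)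
              simp [h1, h2]
        _ = 2 * (E.map fun e => (if X r e z then 1 else 0)).sum :=
            Multiset.sum_map_mul_left
        _ = 2 * elig z := by rw [mcountP_eq]
        _ ≤ 2 * (T*Δ) := by
            apply Nat.mul_le_mul_left
            rw [hGdef z] at hGz
            exact hGz
    · have hzero : (E.map fun e => ∑ v : Fin m → Fin n,
          ((if (z,v) ∈ Sel e then 1 else 0) + (if (v,z) ∈ Sel e then 1 else 0))).sum = 0 := by
        apply Multiset.sum_eq_zero
        intro a ha
        obtain ⟨e, hee, rfl⟩ := Multiset.mem_map.mp ha
        apply Finset.sum_eq_zero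
        intro v _
        have h1 : (z,v) ∉ Sel e := fun hmem => hGz ((hSel2 e hee _ hmem).1)
        have h2 : (v,z) ∉ Sel e := fun hmem => hGz ((hSel2 e hee _ hmem).2.1)
        simp [h1, h2]
      rw [hzero]
      exact Nat.zero_le _
  refine ⟨B, hsym, ?_, ?_⟩
  · -- operator norm bound
    have hR : ((2*T : ℕ) : ℝ) * (Δ : ℝ) = ((2*(T*Δ) : ℕ) : ℝ) := by push_cast; ring
    rw [hR]
    apply opNorm_le_rowsum
    · positivity
    · intro i j
      simp only [Matrix.of_apply]
      positivity
    · intro i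
      simp only [Matrix.of_apply]
      rw [← Nat.cast_sum]
      exact_mod_cast hrowN i
    · intro j
      simp only [Matrix.of_apply]
      rw [← Nat.cast_sum]
      have : ∑ i : Fin m → Fin n, B i j = ∑ i : Fin m → Fin n, B j i :=
        Finset.sum_congr rfl fun i _ => hsym i j
      rw [this]
      exact_mod_cast hrowN j
  · -- the quadratic form identity
    intro x hx
    have hcast : ∀ u v : Fin m → Fin n, (B u v : ℝ)
        = (E.map fun e => (((if (u,v) ∈ Sel e then (1:ℝ) else 0)
            + (if (v,u) ∈ Sel e then (1:ℝ) else 0)))).sum := by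
      intro u v
      rw [hB]
      simp only
      rw [mcast_sum]
      congr 1
      apply Multiset.map_congr rfl
      intro e _
      push_cast
      rfl
    have hstep1 : ∑ u : Fin m → Fin n, ∑ v : Fin m → Fin n,
        (B u v : ℝ) * (∏ i, x (v i)) * (∏ i, x (u i))
        = (E.map fun e => ∑ u : Fin m → Fin n, ∑ v : Fin m → Fin n,
            ((if (u,v) ∈ Sel e then (1:ℝ) else 0) + (if (v,u) ∈ Sel e then (1:ℝ) else 0))
              * (∏ i, x (v i)) * (∏ i, x (u i))).sum := by
      rw [← msum_swap]
      apply Finset.sum_congr rfl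
      intro u _
      rw [← msum_swap]
      apply Finset.sum_congr rfl
      intro v _
      rw [hcast]
      rw [← Multiset.sum_map_mul_right, ← Multiset.sum_map_mul_right]
    have hperedge : ∀ e ∈ E, ∑ u : Fin m → Fin n, ∑ v : Fin m → Fin n,
        ((if (u,v) ∈ Sel e then (1:ℝ) else 0) + (if (v,u) ∈ Sel e then (1:ℝ) else 0))
          * (∏ i, x (v i)) * (∏ i, x (u i))
        = 2 * ((n:ℝ)^(m-1)) * ∏ w ∈ e, x w := by
      intro e hee
      have hterm : ∀ u v : Fin m → Fin n,
          ((if (u,v) ∈ Sel e then (1:ℝ) else 0) + (if (v,u) ∈ Sel e then (1:ℝ) else 0))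
            * (∏ i, x (v i)) * (∏ i, x (u i))
          = (if (u,v) ∈ Sel e then (∏ i, x (v i)) * (∏ i, x (u i)) else 0)
            + (if (v,u) ∈ Sel e then (∏ i, x (v i)) * (∏ i, x (u i)) else 0) := by
        intro u v
        by_cases h1 : (u,v) ∈ Sel e <;> by_cases h2 : (v,u) ∈ Sel e <;>
          simp [h1, h2] <;> ring
      simp_rw [hterm]
      simp_rw [Finset.sum_add_distrib]
      have hA : ∑ u : Fin m → Fin n, ∑ v : Fin m → Fin n,
          (if (u,v) ∈ Sel e then (∏ i, x (v i)) * (∏ i, x (u i)) else 0)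
          = ((n:ℝ)^(m-1)) * ∏ w ∈ e, x w := by
        rw [← Finset.sum_product']
        have h1 : ∀ p : (Fin m → Fin n) × (Fin m → Fin n),
            (if (p.1, p.2) ∈ Sel e then (∏ i, x (p.2 i)) * (∏ i, x (p.1 i)) else 0)
            = (if p ∈ Sel e then (∏ i, x (p.2 i)) * (∏ i, x (p.1 i)) else 0) := by
          intro p; rw [Prod.mk.eta]
        rw [Finset.sum_congr rfl fun p _ => h1 p]
        rw [Finset.univ_product_univ, Finset.sum_ite_mem, Finset.univ_inter]
        have h2 : ∀ p ∈ Sel e, (∏ i, x (p.2 i)) * (∏ i, x (p.1 i)) = ∏ w ∈ e, x w :=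
          fun p hp => (hSel2 e hee p hp).2.2.2.2 x hx
        rw [Finset.sum_congr rfl h2, Finset.sum_const, hSel1 e hee, nsmul_eq_mul]
        push_cast
        ring
      have hB2 : ∑ u : Fin m → Fin n, ∑ v : Fin m → Fin n,
          (if (v,u) ∈ Sel e then (∏ i, x (v i)) * (∏ i, x (u i)) else 0)
          = ((n:ℝ)^(m-1)) * ∏ w ∈ e, x w := by
        rw [Finset.sum_comm]
        rw [← Finset.sum_product']
        have h1 : ∀ p : (Fin m → Fin n) × (Fin m → Fin n),
            (if (p.1, p.2) ∈ Sel e then (∏ i, x (p.1 i)) * (∏ i, x (p.2 i)) else 0)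
            = (if p ∈ Sel e then (∏ i, x (p.1 i)) * (∏ i, x (p.2 i)) else 0) := by
          intro p; rw [Prod.mk.eta]
        rw [Finset.sum_congr rfl fun p _ => h1 p]
        rw [Finset.univ_product_univ, Finset.sum_ite_mem, Finset.univ_inter]
        have h2 : ∀ p ∈ Sel e, (∏ i, x (p.1 i)) * (∏ i, x (p.2 i)) = ∏ w ∈ e, x w := by
          intro p hp
          rw [mul_comm]
          exact (hSel2 e hee p hp).2.2.2.2 x hx
        rw [Finset.sum_congr rfl h2, Finset.sum_const, hSel1 e hee, nsmul_eq_mul]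
        push_cast
        ring
      rw [hA, hB2]
      ring
    rw [hstep1, Multiset.map_congr rfl hperedge]
    have hcoef : ∀ e ∈ E, (2:ℝ) * ((n:ℝ)^(m-1)) * ∏ w ∈ e, x w
        = ((2:ℝ) * (n:ℝ)^(m-1)) * ∏ w ∈ e, x w := fun e _ => by ring
    rw [Multiset.map_congr rfl hcoef, Multiset.sum_map_mul_left]
    have hNval : ((n:ℝ) / (2 * (N:ℝ))) * ((2:ℝ) * (n:ℝ)^(m-1)) = 1 := by
      rw [hN]
      have hnR : (0:ℝ) < (n:ℝ) := by exact_mod_cast hn1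
      have hpow : ((n:ℕ)^m : ℝ) = (n:ℝ)^(m-1) * (n:ℝ) := by
        push_cast
        rw [← pow_succ]
        congr 1
        omega
      rw [show (((n:ℕ)^m : ℕ) : ℝ) = ((n:ℕ)^m : ℝ) by push_cast; ring, hpow]
      field_simp
    rw [← mul_assoc, hNval, one_mul]
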